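/- Define cost(n) := 1 if n+1 is a power of two, and cost(n) := ν₂(n+1) + 2 otherwise (the number of hash computations performed during the n-th F-MMB append). Then: (a) cost(n) ≤ ⌊log₂(n+1)⌋ + 1 for every n ≥ 1; and (b) the sequence N ↦ (1/N)·Σ_{n=1}^{N} cost(n) tends to 3 as N → ∞. -/

import Mathlib

open Filter Classical

/-- The number of hash computations performed during the `n`-th F-MMB append:
`1` if `n+1` is a power of two (no merge step, one bagging node), and
`ν₂(n+1) + 2` otherwise. -/
noncomputable def cost (n : ℕ) : ℕ :=
  if ∃ s : ℕ, n + 1 = 2 ^ s then 1 else padicValNat 2 (n + 1) + 2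

/-- Binary digit sum. -/
def sTwo (m : ℕ) : ℕ := (Nat.digits 2 m).sum

/-- `T L = ∑_{i<L} (i+2)`. -/
def TT (L : ℕ) : ℕ := ∑ i ∈ Finset.range L, (i + 2)

lemma sTwo_two_mul (k : ℕ) : sTwo (2 * k) = sTwo k := by
  rcases Nat.eq_zero_or_pos k with hk | hk
  · simp [hk, sTwo]
  · unfold sTwo
    rw [Nat.digits_def' (by norm_num) (by omega)]
    simp [Nat.mul_div_cancel_left k (by norm_num : 0 < 2), Nat.mul_mod_right]

lemma sTwo_two_mul_add_one (k : ℕ) : sTwo (2 * k + 1) = sTwo k + 1 := by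
  unfold sTwo
  rw [Nat.digits_def' (by norm_num) (by omega)]
  have h1 : (2 * k + 1) % 2 = 1 := by omega
  have h2 : (2 * k + 1) / 2 = k := by omega
  rw [h1, h2]
  simp [Nat.add_comm]

lemma padic_two_mul (k : ℕ) (hk : k ≠ 0) :
    padicValNat 2 (2 * k) = padicValNat 2 k + 1 := by
  haveI : Fact (Nat.Prime 2) := ⟨Nat.prime_two⟩
  rw [padicValNat.mul (by norm_num) hk, padicValNat.self (by norm_num)]
  omega

/-- the carry lemma -/
lemma carry (k : ℕ) : sTwo (k + 1) + padicValNat 2 (k + 1) = sTwo k + 1 := by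
  induction k using Nat.strong_induction_on with
  | _ k ih =>
    rcases Nat.even_or_odd k with ⟨j, hj⟩ | ⟨j, hj⟩
    · -- k = 2j, k+1 = 2j+1 odd
      subst hj
      have h2j : 2 * j + 1 = 2 * j + 1 := rfl
      have hv : padicValNat 2 (2 * j + 1) = 0 :=
        padicValNat.eq_zero_of_not_dvd (by omega)
      rw [two_mul] at *
      rw [← two_mul] at *
      rw [hv, sTwo_two_mul_add_one, sTwo_two_mul]
    · -- k = 2j+1, k+1 = 2(j+1)
      subst hj
      have hk1 : 2 * j + 1 + 1 = 2 * (j + 1) := by ring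
      rw [hk1, sTwo_two_mul, padic_two_mul (j + 1) (by omega), sTwo_two_mul_add_one]
      have := ih j (by omega)
      omega

lemma sTwo_pow (s : ℕ) : sTwo (2 ^ s) = 1 := by
  induction s with
  | zero => simp [sTwo]
  | succ n ih => rw [pow_succ, mul_comm, sTwo_two_mul, ih]

lemma sTwo_pow_sub_one (s : ℕ) : sTwo (2 ^ s - 1) = s := by
  induction s with
  | zero => simp [sTwo]
  | succ n ih =>
    have h : 2 ^ (n + 1) - 1 = 2 * (2 ^ n - 1) + 1 := by
      have : 1 ≤ 2 ^ n := Nat.one_le_two_pow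
      rw [pow_succ]; omega
    rw [h, sTwo_two_mul_add_one, ih]

lemma log_pow_sub_one (s : ℕ) (hs : 1 ≤ s) : Nat.log 2 (2 ^ s - 1) = s - 1 := by
  apply Nat.log_eq_of_pow_le_of_lt_pow
  · have : 2 ^ (s - 1) + 2 ^ (s - 1) = 2 ^ s := by
      rw [← two_mul, ← pow_succ']; congr 1; omega
    have h1 : 1 ≤ 2 ^ (s - 1) := Nat.one_le_two_pow
    omega
  · have : s - 1 + 1 = s := by omega
    rw [this]
    have h1 : 1 ≤ 2 ^ s := Nat.one_le_two_pow
    omega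

lemma log_of_not_pow (m : ℕ) (hm : 2 ≤ m) (h : ¬∃ s : ℕ, m = 2 ^ s) :
    Nat.log 2 m = Nat.log 2 (m - 1) := by
  have hm1 : 1 ≤ m - 1 := by omega
  have h1 : 2 ^ Nat.log 2 (m - 1) ≤ m - 1 := Nat.pow_log_le_self 2 (by omega)
  have h2 : m - 1 < 2 ^ (Nat.log 2 (m - 1) + 1) := Nat.lt_pow_succ_log_self (by norm_num) _
  apply Nat.log_eq_of_pow_le_of_lt_pow
  · omega
  · have : m ≠ 2 ^ (Nat.log 2 (m - 1) + 1) := fun hc => h ⟨_, hc⟩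
    omega

lemma cost_pow {n s : ℕ} (h : n + 1 = 2 ^ s) : cost n = 1 := by
  rw [cost, if_pos ⟨s, h⟩]

lemma cost_not_pow {n : ℕ} (h : ¬∃ s : ℕ, n + 1 = 2 ^ s) :
    cost n = padicValNat 2 (n + 1) + 2 := by
  rw [cost, if_neg h]

/-- Exact formula for the partial sums. -/
lemma key (N : ℕ) (hN : 1 ≤ N) :
    (∑ n ∈ Finset.Icc 1 N, cost n) + sTwo (N + 1) + TT (Nat.log 2 (N + 1))
      = 3 * N + 1 := by
  induction N with
  | zero => omega
  | succ N ih =>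
    rcases Nat.eq_zero_or_pos N with h0 | h0
    · subst h0
      have hc : cost 1 = 1 := cost_pow (s := 1) rfl
      have hl : Nat.log 2 2 = 1 := Nat.log_pow (b := 2) (by norm_num) 1
      simp [hc, sTwo, TT, Finset.sum_range_succ, hl]
    · have ih' := ih h0
      rw [Finset.sum_Icc_succ_top (by omega)]
      by_cases hp : ∃ s : ℕ, N + 1 + 1 = 2 ^ s
      · obtain ⟨s, hs⟩ := hp
        obtain ⟨t, rfl⟩ : ∃ t, s = t + 1 := by
          refine ⟨s - 1, ?_⟩
          rcases Nat.eq_zero_or_pos s with h | h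
          · subst h; simp at hs
          · omega
        have hc : cost (N + 1) = 1 := cost_pow hs
        have h1 : 1 ≤ 2 ^ (t + 1) := Nat.one_le_two_pow
        have hN1 : N + 1 = 2 ^ (t + 1) - 1 := by omega
        have e1 : sTwo (N + 1) = t + 1 := by rw [hN1, sTwo_pow_sub_one]
        have e2 : Nat.log 2 (N + 1) = t := by
          rw [hN1]
          simpa using log_pow_sub_one (t + 1) (by omega)
        have e3 : sTwo (N + 1 + 1) = 1 := by rw [hs, sTwo_pow]
        have e4 : Nat.log 2 (N + 1 + 1) = t + 1 := by rw [hs, Nat.log_pow (by norm_num)]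
        have e5 : TT (t + 1) = TT t + (t + 2) := Finset.sum_range_succ _ t
        rw [e1, e2] at ih'
        rw [hc, e3, e4, e5]
        omega
      · have hc : cost (N + 1) = padicValNat 2 (N + 1 + 1) + 2 := cost_not_pow hp
        have e1 : Nat.log 2 (N + 1 + 1) = Nat.log 2 (N + 1) := by
          have := log_of_not_pow (N + 1 + 1) (by omega) hp
          simpa using this
        have e2 := carry (N + 1)
        rw [hc, e1]
        omega

lemma sTwo_le (m : ℕ) (hm : 1 ≤ m) : sTwo m ≤ Nat.log 2 m + 1 := by
  have hlen : (Nat.digits 2 m).length = Nat.log 2 m + 1 := Nat.digits_len 2 m (by norm_num) (by omega)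
  have h1 : sTwo m ≤ (Nat.digits 2 m).length • 1 := by
    apply List.sum_le_card_nsmul
    intro x hx
    have := Nat.digits_lt_base (by norm_num) hx
    omega
  simp only [smul_eq_mul, mul_one] at h1
  omega

lemma sTwo_pos (m : ℕ) (hm : 1 ≤ m) : 1 ≤ sTwo m := by
  by_contra h
  have h0 : sTwo m = 0 := by omega
  have : m ≠ 0 := by omega
  have hne : Nat.digits 2 m ≠ [] := Nat.digits_ne_nil_iff_ne_zero.2 this
  have hlast := Nat.getLast_digit_ne_zero 2 this
  have : (Nat.digits 2 m).getLast hne ∈ Nat.digits 2 m := List.getLast_mem hne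
  have hz : ∀ x ∈ Nat.digits 2 m, x = 0 := List.sum_eq_zero_iff.1 h0
  exact hlast (hz _ this)

lemma TT_le (L : ℕ) : TT L ≤ L * (L + 1) := by
  calc TT L ≤ ∑ _i ∈ Finset.range L, (L + 1) := by
        apply Finset.sum_le_sum
        intro i hi
        have := Finset.mem_range.1 hi
        omega
    _ = L * (L + 1) := by rw [Finset.sum_const, Finset.card_range, smul_eq_mul]

lemma log_tendsto : Tendsto (fun N : ℕ => Nat.log 2 (N + 1)) atTop atTop := by
  apply tendsto_atTop_atTop.2
  intro b
  refine ⟨2 ^ b, fun N hN => ?_⟩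
  calc b = Nat.log 2 (2 ^ b) := (Nat.log_pow (by norm_num) b).symm
    _ ≤ Nat.log 2 (N + 1) := Nat.log_mono_right (by omega)

/-- (a) The F-MMB append cost satisfies `cost n ≤ ⌊log₂ (n+1)⌋ + 1` for every `n ≥ 1`;
(b) its Cesàro average tends to `3`. -/
theorem fmmb_append_cost :
    (∀ n : ℕ, 1 ≤ n → cost n ≤ Nat.log 2 (n + 1) + 1) ∧
    Tendsto (fun N : ℕ => (N : ℝ)⁻¹ * ∑ n ∈ Finset.Icc 1 N, (cost n : ℝ))
      atTop (nhds 3) := by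
  constructor
  · -- part (a)
    intro n hn
    by_cases hp : ∃ s : ℕ, n + 1 = 2 ^ s
    · rw [cost_pow hp.choose_spec]; omega
    · rw [cost_not_pow hp]
      set v := padicValNat 2 (n + 1) with hv
      have hdvd : 2 ^ v ∣ n + 1 := pow_padicValNat_dvd
      obtain ⟨q, hq⟩ := hdvd
      have hq1 : q ≠ 1 := by
        intro h1
        exact hp ⟨v, by rw [hq, h1, mul_one]⟩
      have hq0 : q ≠ 0 := by
        intro h0; rw [h0, mul_zero] at hq; omega
      have h2 : 2 ^ (v + 1) ≤ n + 1 := by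
        calc 2 ^ (v + 1) = 2 ^ v * 2 := by ring
          _ ≤ 2 ^ v * q := by
              apply Nat.mul_le_mul_left; omega
          _ = n + 1 := hq.symm
      have := (Nat.le_log_iff_pow_le (by norm_num) (by omega : n + 1 ≠ 0)).2 h2
      omega
  · -- part (b)
    set u := fun N : ℕ => Nat.log 2 (N + 1) with hu
    -- error term
    have herr : Tendsto
        (fun N : ℕ => (N : ℝ)⁻¹ * ((1 : ℝ) - sTwo (N + 1) - TT (u N)))
        atTop (nhds 0) := by
      -- squeeze by h ∘ u where h L = 8 * (L+1)^2 * (1/2)^L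
      have hh : Tendsto (fun L : ℕ => 8 * ((L : ℝ) + 1) ^ 2 * (1 / 2 : ℝ) ^ L)
          atTop (nhds 0) := by
        have base : Tendsto (fun L : ℕ => ((L : ℝ) + 1) ^ 2 * (1 / 2 : ℝ) ^ (L + 1))
            atTop (nhds 0) := by
          have := tendsto_pow_const_mul_const_pow_of_lt_one 2
            (by norm_num : (0:ℝ) ≤ 1/2) (by norm_num : (1/2:ℝ) < 1)
          have hcomp := this.comp (tendsto_add_atTop_nat 1)
          apply hcomp.congr
          intro n
          simp only [Function.comp]
          push_cast
          ring
        have := base.const_mul (16 : ℝ)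
        rw [mul_zero] at this
        apply this.congr
        intro L
        rw [pow_succ]
        ring
      have hcomp : Tendsto
          (fun N : ℕ => 8 * ((u N : ℝ) + 1) ^ 2 * (1 / 2 : ℝ) ^ (u N))
          atTop (nhds 0) := hh.comp log_tendsto
      apply squeeze_zero_norm'
          (a := fun N : ℕ => 8 * ((u N : ℝ) + 1) ^ 2 * (1 / 2 : ℝ) ^ (u N)) ?_ hcomp
      filter_upwards [eventually_ge_atTop 1] with N hN
      set L := u N with hL
      have hs1 : 1 ≤ sTwo (N + 1) := sTwo_pos (N + 1) (by omega)
      have hs2 : sTwo (N + 1) ≤ L + 1 := sTwo_le (N + 1) (by omega)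
      have ht : TT L ≤ L * (L + 1) := TT_le L
      have habs : |(1 : ℝ) - sTwo (N + 1) - TT L| ≤ ((L : ℝ) + 1) ^ 2 := by
        rw [abs_sub_comm, abs_of_nonneg]
        · have h1 : (sTwo (N + 1) : ℝ) ≤ (L : ℝ) + 1 := by exact_mod_cast hs2
          have h2 : (TT L : ℝ) ≤ (L : ℝ) * ((L : ℝ) + 1) := by exact_mod_cast ht
          nlinarith
        · have h1 : (1 : ℝ) ≤ (sTwo (N + 1) : ℝ) := by exact_mod_cast hs1
          have h2 : (0 : ℝ) ≤ (TT L : ℝ) := by positivity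
          linarith
      have hNinv : (N : ℝ)⁻¹ ≤ 2 * (1 / 2 : ℝ) ^ L := by
        have hpow : 2 ^ L ≤ N + 1 := by
          have := Nat.pow_log_le_self 2 (show N + 1 ≠ 0 by omega)
          simpa [hL, hu] using this
        have hpow' : (2 : ℝ) ^ L ≤ 2 * N := by
          have : (2 : ℕ) ^ L ≤ 2 * N := by omega
          exact_mod_cast this
        have hNpos : (0 : ℝ) < N := by exact_mod_cast hN
        have hrw : 2 * (1 / 2 : ℝ) ^ L = 2 * ((2 : ℝ) ^ L)⁻¹ := by
          rw [one_div, inv_pow]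
        rw [hrw]
        calc (N : ℝ)⁻¹ = 2 * (2 * (N : ℝ))⁻¹ := by field_simp
          _ ≤ 2 * ((2 : ℝ) ^ L)⁻¹ := by gcongr
      rw [norm_mul, norm_inv, Real.norm_natCast, Real.norm_eq_abs]
      calc (N : ℝ)⁻¹ * |(1 : ℝ) - sTwo (N + 1) - TT L|
          ≤ (2 * (1 / 2 : ℝ) ^ L) * ((L : ℝ) + 1) ^ 2 := by
            apply mul_le_mul hNinv habs (abs_nonneg _) (by positivity)
        _ ≤ 8 * ((L : ℝ) + 1) ^ 2 * (1 / 2 : ℝ) ^ L := by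
            have : (0:ℝ) ≤ (1 / 2 : ℝ) ^ L := by positivity
            nlinarith [sq_nonneg ((L:ℝ)+1)]
    -- combine
    have hmain : Tendsto (fun N : ℕ => 3 + (N : ℝ)⁻¹ * ((1 : ℝ) - sTwo (N + 1) - TT (u N)))
        atTop (nhds 3) := by
      have := (tendsto_const_nhds (x := (3:ℝ)) (f := atTop)).add herr
      simpa using this
    apply hmain.congr'
    filter_upwards [eventually_ge_atTop 1] with N hN
    have hk := key N hN
    have hNpos : (0 : ℝ) < N := by exact_mod_cast hN
    have hsum : (∑ n ∈ Finset.Icc 1 N, (cost n : ℝ))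
        = 3 * N + 1 - sTwo (N + 1) - TT (u N) := by
      have : ((∑ n ∈ Finset.Icc 1 N, cost n : ℕ) : ℝ)
          + sTwo (N + 1) + TT (u N) = 3 * N + 1 := by exact_mod_cast hk
      push_cast at this ⊢
      linarith
    rw [hsum]
    field_simp
    ring
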